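/- (Proposition 4(a)) Let ℓ be a nonisotropic cycle with ⟨ℓ, p⟩ = 0, and let u, v be two distinct points of H lying on the line defined by ℓ (i.e., ⟨ℓ, q(u)⟩ = ⟨ℓ, q(v)⟩ = 0). Let T : F → F be a linear map preserving the cycle pairing (⟨T x, T y⟩ = ⟨x, y⟩ for all x, y ∈ F) such that T(p) = p, T(q(u)) = q(u) and T(q(v)) = q(v). Then T is either the identity map of F or the reflection along ℓ, i.e., T(x) = x − 2(⟨x, ℓ⟩/⟨ℓ, ℓ⟩)·ℓ for all x ∈ F. -/

import Mathlib

variable {K : Type*} [Field K] [LinearOrder K] [IsStrictOrderedRing K]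
variable {E : Type*} [AddCommGroup E] [Module K E]

/-- The cycle pairing on the space of cycles `F = K × E × K`:
`⟨(a,b,c),(a',b',c')⟩ = B(b,b') − 2ac' − 2a'c`. -/
def cyc (B : LinearMap.BilinForm K E) (f g : K × E × K) : K :=
  B f.2.1 g.2.1 - 2 * f.1 * g.2.2 - 2 * g.1 * f.2.2

/-- The normalized zero circle centered at `u`: the cycle `(1, −2u, B(u,u))`. -/
def qc (B : LinearMap.BilinForm K E) (u : E) : K × E × K :=
  (1, (-2 : K) • u, B u u)

section Aux

variable (B : LinearMap.BilinForm K E)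

lemma cyc_add_left (x y z : K × E × K) : cyc B (x + y) z = cyc B x z + cyc B y z := by
  simp [cyc, Prod.fst_add, Prod.snd_add, map_add, LinearMap.add_apply]; ring

lemma cyc_smul_left (c : K) (x z : K × E × K) : cyc B (c • x) z = c * cyc B x z := by
  simp [cyc, Prod.smul_fst, Prod.smul_snd, map_smul, LinearMap.smul_apply, smul_eq_mul]; ring

lemma cyc_sub_left (x y z : K × E × K) : cyc B (x - y) z = cyc B x z - cyc B y z := by
  simp [cyc, Prod.fst_sub, Prod.snd_sub, map_sub, LinearMap.sub_apply]; ring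

lemma cyc_symm (hsymm : ∀ x y : E, B x y = B y x) (x y : K × E × K) :
    cyc B x y = cyc B y x := by
  simp only [cyc, hsymm x.2.1 y.2.1]; ring

lemma cyc_zero_left (z : K × E × K) : cyc B 0 z = 0 := by
  simp [cyc]

end Aux

/-- Proposition 4(a): an orthogonal transformation of `F` fixing `p` and two distinct
points of a line `L` is either the identity or the reflection along the cycle of `L`. -/
theorem prop4a_identity_or_reflection
    (B : LinearMap.BilinForm K E)
    (heuc : ∀ x : K, 0 ≤ x → ∃ y : K, y * y = x)
    (hdim : Module.finrank K E = 2)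
    (hsymm : ∀ x y : E, B x y = B y x)
    (hpos : ∀ x : E, x ≠ 0 → 0 < B x x)
    (i : E) (hi : B i i = 1)
    (l : K × E × K) (hl : cyc B l l ≠ 0)
    (hlp : cyc B l ((0 : K), i, (0 : K)) = 0)
    (u v : E) (hu : B i u < 0) (hv : B i v < 0) (huv : u ≠ v)
    (hlu : cyc B l (qc B u) = 0) (hlv : cyc B l (qc B v) = 0)
    (T : (K × E × K) →ₗ[K] (K × E × K))
    (hT : ∀ x y : K × E × K, cyc B (T x) (T y) = cyc B x y)
    (hTp : T ((0 : K), i, (0 : K)) = ((0 : K), i, (0 : K)))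
    (hTu : T (qc B u) = qc B u) (hTv : T (qc B v) = qc B v) :
    (∀ x : K × E × K, T x = x) ∨
    (∀ x : K × E × K, T x = x - (2 * (cyc B x l / cyc B l l)) • l) := by
  classical
  set p : K × E × K := ((0 : K), i, (0 : K)) with hp_def
  have hiE : i ≠ 0 := by
    intro h
    rw [h] at hi
    simp at hi
  -- nondegeneracy of cyc
  have hnondeg : ∀ w : K × E × K, (∀ y : K × E × K, cyc B w y = 0) → w = 0 := by
    intro w h
    have h1 := h ((0 : K), (0 : E), (1 : K))
    have h2 := h ((1 : K), (0 : E), (0 : K))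
    have h3 := h ((0 : K), w.2.1, (0 : K))
    simp [cyc] at h1 h2 h3
    have hb : w.2.1 = 0 := by
      by_contra hb
      exact absurd h3 (ne_of_gt (hpos _ hb))
    refine Prod.ext h1 (Prod.ext hb h2)
  -- finite dimensionality and dimension count
  have hfinE : FiniteDimensional K E := FiniteDimensional.of_finrank_pos (by omega)
  have hcard : Module.finrank K (K × E × K) = 4 := by
    simp [Module.finrank_prod, hdim]
  -- linear independence of p, q(u), q(v), l
  have hli : LinearIndependent K ![p, qc B u, qc B v, l] := by
    rw [Fintype.linearIndependent_iff]
    intro g hg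
    rw [Fin.sum_univ_four] at hg
    simp only [Matrix.cons_val_zero, Matrix.cons_val_one, Matrix.head_cons,
      Matrix.cons_val_two, Matrix.tail_cons, Matrix.cons_val_three] at hg
    -- pair with l to get g 3 = 0
    have h3 : g 3 = 0 := by
      have hc := congrArg (fun w => cyc B w l) hg
      simp only [cyc_add_left, cyc_smul_left, cyc_zero_left] at hc
      rw [cyc_symm B hsymm p l, cyc_symm B hsymm (qc B u) l, cyc_symm B hsymm (qc B v) l] at hc
      rw [hlp, hlu, hlv] at hc
      have : g 3 * cyc B l l = 0 := by linarith
      rcases mul_eq_zero.mp this with h | h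
      · exact h
      · exact absurd h hl
    rw [h3, zero_smul, add_zero] at hg
    have e1 := congrArg Prod.fst hg
    have eE := congrArg (fun z : K × E × K => z.2.1) hg
    have e3 := congrArg (fun z : K × E × K => z.2.2) hg
    simp only [hp_def, qc, Prod.fst_add, Prod.snd_add, Prod.smul_fst, Prod.smul_snd,
      smul_eq_mul, Prod.fst_zero, Prod.snd_zero] at e1 eE e3
    have hc12 : g 2 = -(g 1) := by
      have : g 0 * 0 + g 1 * 1 + g 2 * 1 = 0 := e1
      linarith
    by_cases hg1 : g 1 = 0
    · have hg2 : g 2 = 0 := by rw [hc12, hg1, neg_zero]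
      have hg0 : g 0 = 0 := by
        rw [hg1, hg2] at eE
        simp only [zero_smul, add_zero] at eE
        rcases smul_eq_zero.mp eE with h | h
        · exact h
        · exact absurd h hiE
      intro j; fin_cases j <;> assumption
    · exfalso
      rw [hc12] at eE e3
      have hE : (2 * g 1) • (u - v) = (g 0) • i := by
        linear_combination (norm := module) -eE
      have huuvv : B u u = B v v := by
        have : g 0 * 0 + g 1 * B u u + -(g 1) * B v v = 0 := e3
        have h' : g 1 * (B u u - B v v) = 0 := by linarith
        rcases mul_eq_zero.mp h' with h | h
        · exact absurd h hg1
        · linarith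
      have hBE := congrArg (fun w => B w (u + v)) hE
      simp only [map_smul, smul_eq_mul, map_sub, map_add, LinearMap.sub_apply,
        LinearMap.add_apply, LinearMap.smul_apply] at hBE
      have hg0 : g 0 = 0 := by
        have hne : B i u + B i v < 0 := by linarith
        have hz : g 0 * (B i u + B i v) = 0 := by
          linear_combination -hBE + 2 * g 1 * huuvv - 2 * g 1 * (hsymm v u)
        rcases mul_eq_zero.mp hz with h | h
        · exact h
        · exact absurd h (ne_of_lt hne)
      rw [hg0, zero_smul] at hE
      rcases smul_eq_zero.mp hE with h | h
      · have : g 1 = 0 := by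
          have : (2 : K) ≠ 0 := two_ne_zero
          rcases mul_eq_zero.mp h with h' | h'
          · exact absurd h' this
          · exact h'
        exact hg1 this
      · exact huv (sub_eq_zero.mp h)
  -- the four cycles span F
  have hspan : Submodule.span K (Set.range ![p, qc B u, qc B v, l]) = ⊤ :=
    hli.span_eq_top_of_card_eq_finrank (by simp [hcard])
  -- key lemma: a vector orthogonal to p, q(u), q(v), l is zero
  have hkey : ∀ w : K × E × K, cyc B w p = 0 → cyc B w (qc B u) = 0 →
      cyc B w (qc B v) = 0 → cyc B w l = 0 → w = 0 := by
    intro w h1 h2 h3 h4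
    apply hnondeg
    intro y
    have hy : y ∈ Submodule.span K (Set.range ![p, qc B u, qc B v, l]) := by
      rw [hspan]; trivial
    induction hy using Submodule.span_induction with
    | mem z hz =>
      obtain ⟨j, rfl⟩ := hz
      fin_cases j
      · simpa using h1
      · simpa using h2
      · simpa using h3
      · simpa using h4
    | zero => rw [cyc_symm B hsymm, cyc_zero_left]
    | add a b _ _ ha hb =>
      rw [cyc_symm B hsymm, cyc_add_left, cyc_symm B hsymm a w, cyc_symm B hsymm b w] at *
      rw [ha, hb, add_zero]
    | smul c a _ ha =>
      rw [cyc_symm B hsymm, cyc_smul_left, cyc_symm B hsymm a w] at *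
      rw [ha, mul_zero]
  -- T preserves pairing with the fixed cycles
  have hop : ∀ x, cyc B (T x) p = cyc B x p := fun x => by
    conv_lhs => rw [← hTp]
    exact hT x p
  have hou : ∀ x, cyc B (T x) (qc B u) = cyc B x (qc B u) := fun x => by
    conv_lhs => rw [← hTu]
    exact hT x _
  have hov : ∀ x, cyc B (T x) (qc B v) = cyc B x (qc B v) := fun x => by
    conv_lhs => rw [← hTv]
    exact hT x _
  -- T l = s • l
  set s : K := cyc B (T l) l / cyc B l l with hs_def
  have hTl : T l = s • l := by
    have := hkey (T l - s • l) ?_ ?_ ?_ ?_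
    · rwa [sub_eq_zero] at this
    · rw [cyc_sub_left, hop, cyc_smul_left, hlp, mul_zero, sub_zero]
    · rw [cyc_sub_left, hou, cyc_smul_left, hlu, mul_zero, sub_zero]
    · rw [cyc_sub_left, hov, cyc_smul_left, hlv, mul_zero, sub_zero]
    · rw [cyc_sub_left, cyc_smul_left, hs_def, div_mul_cancel₀ _ hl, sub_self]
  have hs2 : s * s = 1 := by
    have h := hT l l
    rw [hTl, cyc_smul_left, cyc_symm B hsymm _ (s • l), cyc_smul_left,
      cyc_symm B hsymm l l] at h
    have hz : (s * s - 1) * cyc B l l = 0 := by linear_combination h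
    rcases mul_eq_zero.mp hz with h' | h'
    · have := sub_eq_zero.mp h'
      linarith
    · exact absurd h' hl
  rcases mul_self_eq_one_iff.mp hs2 with hs1 | hsm1
  · -- identity case
    left
    intro x
    have := hkey (T x - x) ?_ ?_ ?_ ?_
    · rwa [sub_eq_zero] at this
    · rw [cyc_sub_left, hop, sub_self]
    · rw [cyc_sub_left, hou, sub_self]
    · rw [cyc_sub_left, hov, sub_self]
    · have : cyc B (T x) l = cyc B x l := by
        conv_lhs => rw [show l = T l by rw [hTl, hs1, one_smul]]
        exact hT x l
      rw [cyc_sub_left, this, sub_self]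
  · -- reflection case
    right
    intro x
    have hTxl : cyc B (T x) l = -cyc B x l := by
      have h := hT x l
      rw [hTl, hsm1] at h
      rw [cyc_symm B hsymm (T x), cyc_smul_left, cyc_symm B hsymm l (T x)] at h
      linarith [h]
    have := hkey (T x - (x - (2 * (cyc B x l / cyc B l l)) • l)) ?_ ?_ ?_ ?_
    · rwa [sub_eq_zero] at this
    · rw [cyc_sub_left, hop, cyc_sub_left, cyc_smul_left, hlp, mul_zero, sub_zero, sub_self]
    · rw [cyc_sub_left, hou, cyc_sub_left, cyc_smul_left, hlu, mul_zero, sub_zero, sub_self]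
    · rw [cyc_sub_left, hov, cyc_sub_left, cyc_smul_left, hlv, mul_zero, sub_zero, sub_self]
    · rw [cyc_sub_left, hTxl, cyc_sub_left, cyc_smul_left]
      rw [mul_assoc, div_mul_cancel₀ _ hl]
      ring
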